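/- Let Ω₁ ⊂ ℍₛⁿ be real-path-connected, Ω₂ real-path-connected and Ω₁-stem-preserving, Ω₃ Ω₂-stem-preserving, and f ∈ 𝒫𝒮(Ω₁), g ∈ 𝒫𝒮(Ω₂), h ∈ 𝒫𝒮(Ω₃). Then (f*g)*h = f*(g*h) as functions on Ω₁. -/
import Mathlib


noncomputable section
open Quaternion Matrix

abbrev Hq := Quaternion ℝ

/-- The set of quaternionic imaginary units. -/
def Sph : Set Hq := {I | I ^ 2 = -1}

/-- `Ψ_i^I` applied to a single complex number: `x + y i ↦ x + y I`. -/
def psi (I : Hq) (z : ℂ) : Hq := (z.re : Hq) + z.im • I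

/-- `Ψ_i^I : ℂⁿ → ℂ_Iⁿ`, componentwise. -/
def liftMap {n : ℕ} (I : Hq) (z : Fin n → ℂ) : Fin n → Hq := fun k => psi I (z k)

/-- The weakly slice cone `Hqₛⁿ = ⋃_{I∈𝕊} ℂ_Iⁿ`. -/
def HSn (n : ℕ) : Set (Fin n → Hq) := {q | ∃ I ∈ Sph, ∃ z : Fin n → ℂ, q = liftMap I z}

/-- A point of `ℂⁿ` is real. -/
def isRealPt {n : ℕ} (z : Fin n → ℂ) : Prop := ∀ k, (z k).im = 0

/-- A point of `Hqⁿ` is real. -/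
def isRealH {n : ℕ} (q : Fin n → Hq) : Prop := ∀ k, q k = ((q k).re : Hq)

/-- The lifted path `γ^I = Ψ_i^I ∘ γ`. -/
def liftP {n : ℕ} (γ : C(unitInterval, Fin n → ℂ)) (I : Hq) (t : unitInterval) : Fin n → Hq :=
  liftMap I (γ t)

/-- `𝕊(Ω, γ) = {I ∈ 𝕊 : γ^I ⊂ Ω}`. -/
def SUnits {n : ℕ} (Ω : Set (Fin n → Hq)) (γ : C(unitInterval, Fin n → ℂ)) : Set Hq :=
  {I | I ∈ Sph ∧ ∀ t, liftP γ I t ∈ Ω}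

/-- `𝒫(ℂⁿ, Ω)`: continuous paths starting in `ℝⁿ` with some lift inside `Ω`. -/
def PathsTo {n : ℕ} (Ω : Set (Fin n → Hq)) : Set C(unitInterval, Fin n → ℂ) :=
  {γ | isRealPt (γ 0) ∧ ∃ I, I ∈ SUnits Ω γ}

/-- `F` is a path-slice stem function of `f` on `Ω`:
`f(γ^I(1)) = (1, I)·F(γ)`. -/
def IsStem {n : ℕ} (Ω : Set (Fin n → Hq)) (f : (Fin n → Hq) → Hq)
    (F : C(unitInterval, Fin n → ℂ) → Fin 2 → Hq) : Prop :=
  ∀ γ ∈ PathsTo Ω, ∀ I ∈ SUnits Ω γ, f (liftP γ I 1) = F γ 0 + I * F γ 1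

/-- `f` is path-slice on `Ω`. -/
def IsPathSlice {n : ℕ} (Ω : Set (Fin n → Hq)) (f : (Fin n → Hq) → Hq) : Prop :=
  ∃ F, IsStem Ω f F

/-- `Ω` is real-path-connected. -/
def RealPathConnected {n : ℕ} (Ω : Set (Fin n → Hq)) : Prop :=
  ∀ q ∈ Ω, ∃ γ ∈ PathsTo Ω, ∃ I ∈ SUnits Ω γ, liftP γ I 1 = q

/-- `Ω₂` is `Ω₁`-stem-preserving: (i) every path of `𝒫(ℂⁿ,Ω₁)` has at least two
units in `𝕊(Ω₂,γ)`; (ii) two paths with the same endpoint share `≠ 1` units. -/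
def StemPreserving {n : ℕ} (Ω₁ Ω₂ : Set (Fin n → Hq)) : Prop :=
  (∀ γ ∈ PathsTo Ω₁, ∃ I ∈ SUnits Ω₂ γ, ∃ J ∈ SUnits Ω₂ γ, I ≠ J) ∧
  (∀ α ∈ PathsTo Ω₁, ∀ β ∈ PathsTo Ω₁, α 1 = β 1 →
    ∀ I ∈ SUnits Ω₂ α ∩ SUnits Ω₂ β, ∃ J ∈ SUnits Ω₂ α ∩ SUnits Ω₂ β, J ≠ I)

/-- The formula `((1,I),(1,J))⁻¹ (f(γ^I(1)), f(γ^J(1)))ᵀ`. -/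
def stemFormula {n : ℕ} (f : (Fin n → Hq) → Hq) (γ : C(unitInterval, Fin n → ℂ)) (I J : Hq) :
    Fin 2 → Hq :=
  ((I - J)⁻¹ • !![I, -J; (1 : Hq), -1]).mulVec ![f (liftP γ I 1), f (liftP γ J 1)]

/-- The sub-stem function `F_{Ω₁}^f` (depends only on `Ω₂` and `f`). -/
noncomputable def subStem {n : ℕ} (Ω₂ : Set (Fin n → Hq)) (f : (Fin n → Hq) → Hq)
    (γ : C(unitInterval, Fin n → ℂ)) : Fin 2 → Hq := by
  classical
  exact if h : ∃ p : Hq × Hq, p.1 ∈ SUnits Ω₂ γ ∧ p.2 ∈ SUnits Ω₂ γ ∧ p.1 ≠ p.2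
    then stemFormula f γ h.choose.1 h.choose.2
    else 0

/-- Normalized imaginary part of a quaternion. -/
def imUnit (a : Hq) : Hq := (‖a - (a.re : Hq)‖)⁻¹ • (a - (a.re : Hq))

/-- The map `𝔍 : Hqₛⁿ → 𝕊 ∪ {0}`. -/
noncomputable def Jmap {n : ℕ} (q : Fin n → Hq) : Hq := by
  classical
  exact if h : ∃ k : Fin n, q k ≠ ((q k).re : Hq) then
    imUnit (q ((Finset.univ.filter fun k => q k ≠ ((q k).re : Hq)).min'
      ⟨h.choose, Finset.mem_filter.2 ⟨Finset.mem_univ _, h.choose_spec⟩⟩))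
  else 0

/-- Componentwise complex conjugate of a path. -/
def conjPath {n : ℕ} (γ : C(unitInterval, Fin n → ℂ)) : C(unitInterval, Fin n → ℂ) :=
  ⟨fun t k => star (γ t k),
    continuous_pi fun k => continuous_star.comp ((continuous_apply k).comp γ.continuous)⟩

/-- The point-form sub-stem function `ℱ_{Ω₁}^f : Ω₁ → Hq^{2×1}`. -/
noncomputable def pointStem {n : ℕ} (Ω₁ Ω₂ : Set (Fin n → Hq)) (f : (Fin n → Hq) → Hq)
    (q : Fin n → Hq) : Fin 2 → Hq := by
  classical
  exact if isRealH q then ![f q, 0]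
    else if h : ∃ γ, γ ∈ PathsTo Ω₁ ∧ (∀ t, liftP γ (Jmap q) t ∈ Ω₁) ∧ liftP γ (Jmap q) 1 = q
    then subStem Ω₂ f h.choose
    else 0

/-- The `*`-product of functions: `(f*g)(q) = (f(q), 𝔍(q)f(q)) · ℱ_{Ω₁}^g(q)`. -/
noncomputable def starProd {n : ℕ} (Ω₁ Ω₂ : Set (Fin n → Hq)) (f g : (Fin n → Hq) → Hq)
    (q : Fin n → Hq) : Hq :=
  f q * pointStem Ω₁ Ω₂ g q 0 + (Jmap q * f q) * pointStem Ω₁ Ω₂ g q 1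

/-- The `*`-product on `Hq^{2×1}` coming from `Hq ⊗_ℝ ℂ`. -/
def vstar (p q : Fin 2 → Hq) : Fin 2 → Hq :=
  ![p 0 * q 0 - p 1 * q 1, p 1 * q 0 + p 0 * q 1]

/-- `Ω` is slice-open: a subset of `Hqₛⁿ` all of whose slices are open. -/
def SliceOpen {n : ℕ} (Ω : Set (Fin n → Hq)) : Prop :=
  Ω ⊆ HSn n ∧ ∀ I ∈ Sph, IsOpen {z : Fin n → ℂ | liftMap I z ∈ Ω}

/-- `Ω` is slice-connected. -/
def SliceConnected {n : ℕ} (Ω : Set (Fin n → Hq)) : Prop :=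
  ∀ U V : Set (Fin n → Hq), SliceOpen U → SliceOpen V → Ω ⊆ U ∪ V →
    (Ω ∩ U).Nonempty → (Ω ∩ V).Nonempty → (Ω ∩ U ∩ V).Nonempty

/-- `Ω` is a slice-domain. -/
def SliceDomain {n : ℕ} (Ω : Set (Fin n → Hq)) : Prop :=
  SliceOpen Ω ∧ SliceConnected Ω

/-- `Ω` is self-stem-preserving. -/
def SelfStemPreserving {n : ℕ} (Ω : Set (Fin n → Hq)) : Prop :=
  RealPathConnected Ω ∧ StemPreserving Ω Ω

/-- `Ω` is open in the Euclidean subspace topology of `Hqₛⁿ`. -/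
def EuclideanOpenIn {n : ℕ} (Ω : Set (Fin n → Hq)) : Prop :=
  ∃ U : Set (Fin n → Hq), IsOpen U ∧ Ω = U ∩ HSn n

/-- `Ω` is weakly axially symmetric. -/
def WeaklyAxiallySymmetric {n : ℕ} (Ω : Set (Fin n → Hq)) : Prop :=
  ∀ (x y : Fin n → ℝ) (I : Hq), I ∈ Sph →
    (fun k => (x k : Hq) + y k • I) ∈ Ω → (fun k => (x k : Hq) - y k • I) ∈ Ω
section Helpers

variable {n : ℕ}

lemma sph_mul_self {I : Hq} (hI : I ∈ Sph) : I * I = -1 := by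
  have := hI; rwa [Sph, Set.mem_setOf_eq, sq] at this

lemma sph_ne_zero {I : Hq} (hI : I ∈ Sph) : I ≠ 0 := by
  intro h
  have h2 := sph_mul_self hI
  rw [h, mul_zero] at h2
  exact (by norm_num : (0:Hq) ≠ -1) h2

lemma sph_norm {I : Hq} (hI : I ∈ Sph) : ‖I‖ = 1 := by
  have h : ‖I‖ * ‖I‖ = 1 := by
    rw [← norm_mul, sph_mul_self hI, norm_neg, norm_one]
  nlinarith [norm_nonneg I]

lemma sph_star {I : Hq} (hI : I ∈ Sph) : star I = -I := by
  have h1 : I * star I = 1 := by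
    have := Quaternion.self_mul_star I
    rw [this]
    have h2 : Quaternion.normSq I = ‖I‖ * ‖I‖ := (Quaternion.normSq_eq_norm_mul_self I)
    rw [h2, sph_norm hI]; norm_num
  have h2 : I * (star I + I) = 0 := by
    rw [mul_add, h1, sph_mul_self hI]; norm_num
  have h3 : star I + I = 0 := by
    rcases mul_eq_zero.mp h2 with h | h
    · exact absurd h (sph_ne_zero hI)
    · exact h
  have := eq_neg_of_add_eq_zero_left h3
  exact this

lemma sph_re {I : Hq} (hI : I ∈ Sph) : I.re = 0 := by
  have h := sph_star hI
  have h2 : I.re = -I.re := by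
    have := congrArg QuaternionAlgebra.re h
    simpa using this
  linarith

lemma sph_neg {I : Hq} (hI : I ∈ Sph) : -I ∈ Sph := by
  rw [Sph, Set.mem_setOf_eq, neg_sq]; exact hI

end Helpers

section Helpers2

variable {n : ℕ}

lemma psi_re {I : Hq} (hI : I ∈ Sph) (z : ℂ) : (psi I z).re = z.re := by
  simp [psi, Quaternion.re_add, Quaternion.re_smul, sph_re hI]

lemma psi_of_im_zero (I : Hq) {z : ℂ} (hz : z.im = 0) : psi I z = (z.re : Hq) := by
  simp [psi, hz]

lemma psi_injective {I : Hq} (hI : I ∈ Sph) : Function.Injective (psi I) := by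
  intro z w h
  have hre : z.re = w.re := by
    have := congrArg QuaternionAlgebra.re h
    rwa [psi_re hI, psi_re hI] at this
  have him : z.im = w.im := by
    have h2 : z.im • I = w.im • I := by
      have := h
      rw [psi, psi, hre] at this
      exact add_left_cancel this
    have h3 : (z.im - w.im) • I = 0 := by rw [sub_smul, h2, sub_self]
    rcases smul_eq_zero.mp h3 with h4 | h4
    · linarith [sub_eq_zero.mp h4]
    · exact absurd h4 (sph_ne_zero hI)
  exact Complex.ext hre him

lemma psi_real_iff {I : Hq} (hI : I ∈ Sph) {z : ℂ} :
    psi I z = ((psi I z).re : Hq) ↔ z.im = 0 := by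
  constructor
  · intro h
    rw [psi_re hI] at h
    have h2 : z.im • I = 0 := by
      have := h
      rw [psi] at this
      have := sub_eq_zero.mpr this
      simpa using this
    rcases smul_eq_zero.mp h2 with h4 | h4
    · exact h4
    · exact absurd h4 (sph_ne_zero hI)
  · intro h
    rw [psi_of_im_zero I h]; simp

lemma liftMap_injective {I : Hq} (hI : I ∈ Sph) : Function.Injective (liftMap (n := n) I) := by
  intro z w h
  funext k
  exact psi_injective hI (congrFun h k)

lemma imUnit_psi {I : Hq} (hI : I ∈ Sph) {z : ℂ} (him : z.im ≠ 0) :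
    imUnit (psi I z) = I ∨ imUnit (psi I z) = -I := by
  have hsub : psi I z - ((psi I z).re : Hq) = z.im • I := by
    rw [psi_re hI, psi]; abel
  have hnorm : ‖z.im • I‖ = |z.im| := by
    rw [norm_smul, sph_norm hI, Real.norm_eq_abs, mul_one]
  rw [imUnit, hsub, hnorm, smul_smul]
  rcases lt_or_gt_of_ne him with h | h
  · right
    rw [abs_of_neg h]
    rw [show (-z.im)⁻¹ * z.im = -1 by field_simp]
    simp
  · left
    rw [abs_of_pos h]
    rw [show (z.im)⁻¹ * z.im = 1 by field_simp]
    simp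

end Helpers2

section Helpers3

variable {n : ℕ}

lemma jmap_of_real {q : Fin n → Hq} (hq : isRealH q) : Jmap q = 0 := by
  unfold Jmap
  rw [dif_neg]
  push_neg
  exact hq

lemma jmap_spec {q : Fin n → Hq} (hq : ¬ isRealH q) :
    ∃ k, q k ≠ ((q k).re : Hq) ∧ Jmap q = imUnit (q k) := by
  classical
  have h : ∃ k : Fin n, q k ≠ ((q k).re : Hq) := by
    rw [isRealH] at hq; push_neg at hq; exact hq
  unfold Jmap
  rw [dif_pos h]
  refine ⟨_, ?_, rfl⟩
  have hmem := Finset.min'_mem (α := Fin n) (Finset.univ.filter fun k => q k ≠ ((q k).re : Hq))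
    ⟨h.choose, Finset.mem_filter.2 ⟨Finset.mem_univ _, h.choose_spec⟩⟩
  exact (Finset.mem_filter.mp hmem).2

lemma jmap_lift {I : Hq} (hI : I ∈ Sph) {z : Fin n → ℂ} (hq : ¬ isRealH (liftMap I z)) :
    Jmap (liftMap I z) = I ∨ Jmap (liftMap I z) = -I := by
  obtain ⟨k, hk, hJ⟩ := jmap_spec hq
  have him : (z k).im ≠ 0 := by
    intro h0
    exact hk ((psi_real_iff hI).mpr h0)
  rw [hJ]
  exact imUnit_psi hI him

lemma liftP_conj (γ : C(unitInterval, Fin n → ℂ)) (I : Hq) :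
    liftP (conjPath γ) (-I) = liftP γ I := by
  funext t k
  show psi (-I) (star (γ t k)) = psi I (γ t k)
  rw [psi, psi]
  simp [Complex.star_def]

lemma conjPath_zero_real {γ : C(unitInterval, Fin n → ℂ)} (h : isRealPt (γ 0)) :
    isRealPt ((conjPath γ) 0) := by
  intro k
  show (star (γ 0 k)).im = 0
  simp [Complex.star_def, h k]

/-- linear algebra over the quaternions -/
lemma hq_lin {I J a b c d : Hq} (hIJ : I ≠ J)
    (h1 : a + I * b = c + I * d) (h2 : a + J * b = c + J * d) : a = c ∧ b = d := by
  have hb : b = d := by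
    have h3 : (I - J) * b = (I - J) * d := by
      have := congrArg₂ (· - ·) h1 h2
      simp only [add_sub_add_comm] at this
      calc (I - J) * b = (a - a) + (I * b - J * b) := by rw [sub_mul]; abel
        _ = (c - c) + (I * d - J * d) := by
              rw [show a - a + (I * b - J * b) = a + I * b - (a + J * b) by abel, h1, h2]; abel
        _ = (I - J) * d := by rw [sub_mul]; abel
    exact mul_left_cancel₀ (sub_ne_zero.mpr hIJ) h3
  refine ⟨?_, hb⟩
  rw [hb] at h1
  exact add_right_cancel h1

lemma mem_SUnits {Ω : Set (Fin n → Hq)} {γ : C(unitInterval, Fin n → ℂ)} {I : Hq}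
    (h1 : I ∈ Sph) (h2 : ∀ t, liftP γ I t ∈ Ω) : I ∈ SUnits Ω γ := ⟨h1, h2⟩

lemma mem_PathsTo {Ω : Set (Fin n → Hq)} {γ : C(unitInterval, Fin n → ℂ)} {I : Hq}
    (h1 : isRealPt (γ 0)) (h2 : I ∈ SUnits Ω γ) : γ ∈ PathsTo Ω := ⟨h1, I, h2⟩

end Helpers3

section Concat

variable {n : ℕ}

/-- Concatenation of `α` with the reverse of `β`, when they share endpoint `1`. -/
def pconcat (α β : C(unitInterval, Fin n → ℂ)) (hab : α 1 = β 1) :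
    C(unitInterval, Fin n → ℂ) :=
  ⟨fun t => if (t : ℝ) ≤ 1/2
      then α (Set.projIcc 0 1 zero_le_one (2 * (t : ℝ)))
      else β (Set.projIcc 0 1 zero_le_one (2 - 2 * (t : ℝ))), by
    apply Continuous.if_le
    · exact α.continuous.comp ((continuous_projIcc).comp (by continuity))
    · exact β.continuous.comp ((continuous_projIcc).comp (by continuity))
    · exact continuous_subtype_val
    · exact continuous_const
    · intro t ht
      rw [ht]
      norm_num
      exact hab⟩

lemma pconcat_zero (α β : C(unitInterval, Fin n → ℂ)) (hab : α 1 = β 1) :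
    pconcat α β hab 0 = α 0 := by
  show (if ((0:unitInterval) : ℝ) ≤ 1/2 then _ else _) = α 0
  rw [if_pos (by norm_num)]
  congr 1
  rw [show (2 * ((0:unitInterval):ℝ)) = 0 by norm_num]
  simp [Set.projIcc]

lemma pconcat_forms (α β : C(unitInterval, Fin n → ℂ)) (hab : α 1 = β 1) (t : unitInterval) :
    (∃ s, pconcat α β hab t = α s) ∨ (∃ s, pconcat α β hab t = β s) := by
  by_cases h : (t : ℝ) ≤ 1/2
  · left; exact ⟨_, by simp only [pconcat, ContinuousMap.coe_mk]; rw [if_pos h]⟩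
  · right; exact ⟨_, by simp only [pconcat, ContinuousMap.coe_mk]; rw [if_neg h]⟩

lemma pconcat_left (α β : C(unitInterval, Fin n → ℂ)) (hab : α 1 = β 1) (s : unitInterval) :
    ∃ t, α s = pconcat α β hab t := by
  have hs := s.2
  rw [Set.mem_Icc] at hs
  refine ⟨⟨(s : ℝ)/2, by constructor <;> nlinarith [hs.1, hs.2]⟩, ?_⟩
  show α s = if ((((s:ℝ)/2 : ℝ)) ≤ 1/2) then α (Set.projIcc 0 1 zero_le_one (2 * ((s:ℝ)/2))) else _
  rw [if_pos (by nlinarith [hs.2])]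
  congr 1
  rw [show 2 * ((s:ℝ)/2) = (s:ℝ) by ring]
  simp [Set.projIcc_val]

lemma pconcat_right (α β : C(unitInterval, Fin n → ℂ)) (hab : α 1 = β 1) (s : unitInterval) :
    ∃ t, β s = pconcat α β hab t := by
  have hs := s.2
  rw [Set.mem_Icc] at hs
  refine ⟨⟨1 - (s : ℝ)/2, by constructor <;> nlinarith [hs.1, hs.2]⟩, ?_⟩
  show β s = if ((1 - (s:ℝ)/2 : ℝ) ≤ 1/2) then α (Set.projIcc 0 1 zero_le_one (2 * (1 - (s:ℝ)/2)))
      else β (Set.projIcc 0 1 zero_le_one (2 - 2 * (1 - (s:ℝ)/2)))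
  by_cases h : (1 - (s:ℝ)/2 : ℝ) ≤ 1/2
  · -- then s = 1
    have hs1 : (s : ℝ) = 1 := by linarith [hs.2]
    rw [if_pos h]
    have h2 : (2 : ℝ) * (1 - (s:ℝ)/2) = 1 := by rw [hs1]; ring
    rw [h2]
    have hse : s = 1 := Subtype.ext hs1
    rw [hse, ← hab]
    congr 1
    simp [Set.projIcc]
  · rw [if_neg h]
    congr 1
    rw [show 2 - 2 * (1 - (s:ℝ)/2) = (s:ℝ) by ring]
    simp [Set.projIcc_val]

end Concat

section StemLemmas

variable {n : ℕ}

lemma stemFormula_eq {Ω' : Set (Fin n → Hq)} {f : (Fin n → Hq) → Hq}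
    {F : C(unitInterval, Fin n → ℂ) → Fin 2 → Hq} (hF : IsStem Ω' f F)
    {γ : C(unitInterval, Fin n → ℂ)} (hγ0 : isRealPt (γ 0))
    {I J : Hq} (hI : I ∈ SUnits Ω' γ) (hJ : J ∈ SUnits Ω' γ) (hne : I ≠ J) :
    stemFormula f γ I J = F γ := by
  have hγ : γ ∈ PathsTo Ω' := mem_PathsTo hγ0 hI
  have e1 := hF γ hγ I hI
  have e2 := hF γ hγ J hJ
  have hII := sph_mul_self hI.1
  have hJJ := sph_mul_self hJ.1
  have hd : (I - J) ≠ 0 := sub_ne_zero.mpr hne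
  funext i
  fin_cases i
  · simp only [stemFormula, Matrix.mulVec, dotProduct, Fin.sum_univ_two, Matrix.smul_apply,
      smul_eq_mul, Matrix.cons_val', Matrix.cons_val_zero, Matrix.cons_val_one, Matrix.head_cons,
      Matrix.empty_val', Matrix.cons_val_fin_one, Matrix.head_fin_const, Matrix.of_apply]
    rw [e1, e2]
    have k1 : I * (F γ 0 + I * F γ 1) = I * F γ 0 - F γ 1 := by
      rw [mul_add, ← mul_assoc, hII, neg_one_mul, ← sub_eq_add_neg]
    have k2 : -J * (F γ 0 + J * F γ 1) = -(J * F γ 0) + F γ 1 := by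
      rw [neg_mul, mul_add, ← mul_assoc, hJJ, neg_one_mul, neg_add, neg_neg]
    have key : I * (F γ 0 + I * F γ 1) + -J * (F γ 0 + J * F γ 1) = (I - J) * F γ 0 := by
      rw [k1, k2, sub_mul]; abel
    calc (I - J)⁻¹ * I * (F γ 0 + I * F γ 1) + (I - J)⁻¹ * -J * (F γ 0 + J * F γ 1)
        = (I - J)⁻¹ * (I * (F γ 0 + I * F γ 1) + -J * (F γ 0 + J * F γ 1)) := by
          rw [mul_assoc, mul_assoc, ← mul_add]
      _ = (I - J)⁻¹ * ((I - J) * F γ 0) := by rw [key]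
      _ = F γ 0 := by rw [← mul_assoc, inv_mul_cancel₀ hd, one_mul]
  · simp only [stemFormula, Matrix.mulVec, dotProduct, Fin.sum_univ_two, Matrix.smul_apply,
      smul_eq_mul, Matrix.cons_val', Matrix.cons_val_zero, Matrix.cons_val_one, Matrix.head_cons,
      Matrix.empty_val', Matrix.cons_val_fin_one, Matrix.head_fin_const, Matrix.of_apply]
    rw [e1, e2]
    have key : (F γ 0 + I * F γ 1) + -(F γ 0 + J * F γ 1) = (I - J) * F γ 1 := by
      rw [sub_mul]; abel
    calc (I - J)⁻¹ * 1 * (F γ 0 + I * F γ 1) + (I - J)⁻¹ * -1 * (F γ 0 + J * F γ 1)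
        = (I - J)⁻¹ * ((F γ 0 + I * F γ 1) + -(F γ 0 + J * F γ 1)) := by
          rw [mul_one, mul_neg_one, neg_mul, ← mul_neg, ← mul_add]
      _ = (I - J)⁻¹ * ((I - J) * F γ 1) := by rw [key]
      _ = F γ 1 := by rw [← mul_assoc, inv_mul_cancel₀ hd, one_mul]

lemma subStem_eq {Ω' : Set (Fin n → Hq)} {f : (Fin n → Hq) → Hq}
    {F : C(unitInterval, Fin n → ℂ) → Fin 2 → Hq} (hF : IsStem Ω' f F)
    {γ : C(unitInterval, Fin n → ℂ)} (hγ0 : isRealPt (γ 0))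
    (hpair : ∃ I ∈ SUnits Ω' γ, ∃ J ∈ SUnits Ω' γ, I ≠ J) :
    subStem Ω' f γ = F γ := by
  have h : ∃ p : Hq × Hq, p.1 ∈ SUnits Ω' γ ∧ p.2 ∈ SUnits Ω' γ ∧ p.1 ≠ p.2 := by
    obtain ⟨I, hI, J, hJ, hne⟩ := hpair
    exact ⟨(I, J), hI, hJ, hne⟩
  unfold subStem
  rw [dif_pos h]
  exact stemFormula_eq hF hγ0 h.choose_spec.1 h.choose_spec.2.1 h.choose_spec.2.2

end StemLemmas

section PathIndep

variable {n : ℕ}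

lemma liftP_apply (γ : C(unitInterval, Fin n → ℂ)) (I : Hq) (t : unitInterval) :
    liftP γ I t = liftMap I (γ t) := rfl

lemma stem_path_indep {Ω Ω' : Set (Fin n → Hq)} (hSP : StemPreserving Ω Ω')
    {k : (Fin n → Hq) → Hq} {K : C(unitInterval, Fin n → ℂ) → Fin 2 → Hq}
    (hK : IsStem Ω' k K) {α β : C(unitInterval, Fin n → ℂ)}
    (hα : α ∈ PathsTo Ω) (hβ : β ∈ PathsTo Ω) (hend : α 1 = β 1)
    {I₀ : Hq} (hIα : I₀ ∈ SUnits Ω α) (hIβ : I₀ ∈ SUnits Ω β) : K α = K β := by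
  set c := pconcat α β hend with hc
  have hc0 : isRealPt (c 0) := by rw [hc, pconcat_zero]; exact hα.1
  have hcU : I₀ ∈ SUnits Ω c := by
    refine ⟨hIα.1, fun t => ?_⟩
    rcases pconcat_forms α β hend t with ⟨s, hs⟩ | ⟨s, hs⟩
    · rw [liftP_apply, hs]; exact hIα.2 s
    · rw [liftP_apply, hs]; exact hIβ.2 s
  have hcP : c ∈ PathsTo Ω := mem_PathsTo hc0 hcU
  obtain ⟨I, hIc, J, hJc, hne⟩ := hSP.1 c hcP
  have trans : ∀ {L : Hq}, L ∈ SUnits Ω' c → L ∈ SUnits Ω' α ∩ SUnits Ω' β := by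
    intro L hL
    refine ⟨⟨hL.1, fun s => ?_⟩, ⟨hL.1, fun s => ?_⟩⟩
    · obtain ⟨t, ht⟩ := pconcat_left α β hend s
      rw [liftP_apply, ht]; exact hL.2 t
    · obtain ⟨t, ht⟩ := pconcat_right α β hend s
      rw [liftP_apply, ht]; exact hL.2 t
  obtain ⟨hIa, hIb⟩ := trans hIc
  obtain ⟨hJa, hJb⟩ := trans hJc
  have hαP : α ∈ PathsTo Ω' := mem_PathsTo hα.1 hIa
  have hβP : β ∈ PathsTo Ω' := mem_PathsTo hβ.1 hIb
  have hendI : ∀ L : Hq, liftP α L 1 = liftP β L 1 := fun L => by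
    rw [liftP_apply, liftP_apply, hend]
  have e1 : K α 0 + I * K α 1 = K β 0 + I * K β 1 := by
    rw [← hK α hαP I hIa, ← hK β hβP I hIb, hendI]
  have e2 : K α 0 + J * K α 1 = K β 0 + J * K β 1 := by
    rw [← hK α hαP J hJa, ← hK β hβP J hJb, hendI]
  obtain ⟨h0, h1⟩ := hq_lin hne e1 e2
  funext i
  fin_cases i
  · exact h0
  · exact h1

lemma stem_conj {Ω Ω' : Set (Fin n → Hq)} (hSP : StemPreserving Ω Ω')
    {k : (Fin n → Hq) → Hq} {K : C(unitInterval, Fin n → ℂ) → Fin 2 → Hq}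
    (hK : IsStem Ω' k K) {γ : C(unitInterval, Fin n → ℂ)} (hγ : γ ∈ PathsTo Ω) :
    K (conjPath γ) 0 = K γ 0 ∧ K (conjPath γ) 1 = -K γ 1 := by
  obtain ⟨I, hI, J, hJ, hne⟩ := hSP.1 γ hγ
  have hIc : -I ∈ SUnits Ω' (conjPath γ) := by
    refine ⟨sph_neg hI.1, fun t => ?_⟩
    rw [liftP_conj]; exact hI.2 t
  have hJc : -J ∈ SUnits Ω' (conjPath γ) := by
    refine ⟨sph_neg hJ.1, fun t => ?_⟩
    rw [liftP_conj]; exact hJ.2 t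
  have hγP : γ ∈ PathsTo Ω' := mem_PathsTo hγ.1 hI
  have hcP : conjPath γ ∈ PathsTo Ω' := mem_PathsTo (conjPath_zero_real hγ.1) hIc
  have e1 : K γ 0 + I * K γ 1 = K (conjPath γ) 0 + I * -K (conjPath γ) 1 := by
    have h := hK (conjPath γ) hcP (-I) hIc
    rw [show liftP (conjPath γ) (-I) 1 = liftP γ I 1 from congrFun (liftP_conj γ I) 1] at h
    rw [← hK γ hγP I hI, h, neg_mul, mul_neg]
  have e2 : K γ 0 + J * K γ 1 = K (conjPath γ) 0 + J * -K (conjPath γ) 1 := by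
    have h := hK (conjPath γ) hcP (-J) hJc
    rw [show liftP (conjPath γ) (-J) 1 = liftP γ J 1 from congrFun (liftP_conj γ J) 1] at h
    rw [← hK γ hγP J hJ, h, neg_mul, mul_neg]
  obtain ⟨h0, h1⟩ := hq_lin hne e1 e2
  exact ⟨h0.symm, by rw [h1, neg_neg]⟩

end PathIndep

section Master

variable {n : ℕ}

lemma key_alg {I G0 G1 K0 K1 : Hq} (hII : I * I = -1) :
    (G0 + I * G1) * K0 + (I * (G0 + I * G1)) * K1
      = (G0 * K0 - G1 * K1) + I * (G1 * K0 + G0 * K1) := by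
  have hx : ∀ x : Hq, I * (I * x) = -x := fun x => by rw [← mul_assoc, hII, neg_one_mul]
  simp only [add_mul, mul_add, mul_assoc, hx, sub_eq_add_neg, smul_mul_assoc]
  abel_nf
  simp [smul_mul_assoc]

lemma vstar_zero (p q : Fin 2 → Hq) : vstar p q 0 = p 0 * q 0 - p 1 * q 1 := rfl

lemma vstar_one (p q : Fin 2 → Hq) : vstar p q 1 = p 1 * q 0 + p 0 * q 1 := rfl

lemma starProd_stem {Ω₂ Ω₃ : Set (Fin n → Hq)} (h₂₃ : StemPreserving Ω₂ Ω₃)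
    {g k : (Fin n → Hq) → Hq} {G K : C(unitInterval, Fin n → ℂ) → Fin 2 → Hq}
    (hG : IsStem Ω₂ g G) (hK : IsStem Ω₃ k K) :
    IsStem Ω₂ (starProd Ω₂ Ω₃ g k) (fun γ => vstar (G γ) (K γ)) := by
  intro γ hγ I hI
  simp only [vstar_zero, vstar_one]
  set q' := liftP γ I 1 with hq'
  have hII : I * I = -1 := sph_mul_self hI.1
  have hg' : g q' = G γ 0 + I * G γ 1 := hG γ hγ I hI
  obtain ⟨I₃, hI₃, J₃, hJ₃, hne₃⟩ := h₂₃.1 γ hγ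
  have hγ3 : γ ∈ PathsTo Ω₃ := mem_PathsTo hγ.1 hI₃
  have kkI : k (liftP γ I₃ 1) = K γ 0 + I₃ * K γ 1 := hK γ hγ3 I₃ hI₃
  have kkJ : k (liftP γ J₃ 1) = K γ 0 + J₃ * K γ 1 := hK γ hγ3 J₃ hJ₃
  by_cases hre : isRealH q'
  · -- endpoint real
    have him : ∀ m, (γ 1 m).im = 0 := by
      intro m
      exact (psi_real_iff hI.1).mp (hre m)
    have hall : ∀ L : Hq, liftP γ L 1 = q' := by
      intro L
      funext m
      show psi L (γ 1 m) = psi I (γ 1 m)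
      rw [psi_of_im_zero _ (him m), psi_of_im_zero _ (him m)]
    have e1 : K γ 0 + I₃ * K γ 1 = k q' + I₃ * 0 := by
      rw [mul_zero, add_zero, ← kkI, hall I₃]
    have e2 : K γ 0 + J₃ * K γ 1 = k q' + J₃ * 0 := by
      rw [mul_zero, add_zero, ← kkJ, hall J₃]
    obtain ⟨hK0, hK1⟩ := hq_lin hne₃ e1 e2
    have hJ0 : Jmap q' = 0 := jmap_of_real hre
    show starProd Ω₂ Ω₃ g k q' = _
    unfold starProd
    unfold pointStem
    rw [if_pos hre, hJ0]
    simp only [Matrix.cons_val_zero, Matrix.cons_val_one, Matrix.head_cons, zero_mul, mul_zero,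
      add_zero]
    rw [hg', ← hK0, hK1]
    simp only [mul_zero, sub_zero, add_zero]
    rw [add_mul, mul_assoc]
  · -- endpoint not real
    have hlift : q' = liftMap I (γ 1) := rfl
    have hJ' : Jmap q' = I ∨ Jmap q' = -I := by
      rw [hlift]
      exact jmap_lift hI.1 (by rw [← hlift]; exact hre)
    have hE' : ∃ γ'' , γ'' ∈ PathsTo Ω₂ ∧ (∀ t, liftP γ'' (Jmap q') t ∈ Ω₂) ∧
        liftP γ'' (Jmap q') 1 = q' := by
      rcases hJ' with h | h
      · exact ⟨γ, hγ, by rw [h]; exact hI.2, by rw [h]⟩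
      · refine ⟨conjPath γ, ?_, ?_, ?_⟩
        · refine mem_PathsTo (conjPath_zero_real hγ.1) (I := -I) ⟨sph_neg hI.1, fun t => ?_⟩
          rw [liftP_conj]; exact hI.2 t
        · intro t; rw [h, liftP_conj]; exact hI.2 t
        · rw [h, liftP_conj]
    show starProd Ω₂ Ω₃ g k q' = _
    unfold starProd
    unfold pointStem
    rw [if_neg hre, dif_pos hE']
    obtain ⟨hc1, hc2, hc3⟩ := hE'.choose_spec
    set γ'' := hE'.choose with hγ''
    have hsub : subStem Ω₃ k γ'' = K γ'' := by
      apply subStem_eq hK hc1.1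
      exact h₂₃.1 γ'' hc1
    rw [hsub]
    rcases hJ' with h | h
    · -- Jmap q' = I
      have hIγ'' : I ∈ SUnits Ω₂ γ'' := ⟨hI.1, by rw [← h]; exact hc2⟩
      have hend : γ'' 1 = γ 1 := by
        apply liftMap_injective hI.1
        show liftP γ'' I 1 = q'
        rw [← h]
        exact hc3
      have hKeq : K γ'' = K γ := stem_path_indep h₂₃ hK hc1 hγ hend hIγ'' hI
      rw [hKeq, h, hg']
      exact key_alg hII
    · -- Jmap q' = -I
      have hIγ'' : -I ∈ SUnits Ω₂ γ'' := ⟨sph_neg hI.1, by rw [← h]; exact hc2⟩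
      have hIβ : -I ∈ SUnits Ω₂ (conjPath γ) := by
        refine ⟨sph_neg hI.1, fun t => ?_⟩
        rw [liftP_conj]; exact hI.2 t
      have hβP : conjPath γ ∈ PathsTo Ω₂ := mem_PathsTo (conjPath_zero_real hγ.1) hIβ
      have hend : γ'' 1 = (conjPath γ) 1 := by
        apply liftMap_injective (sph_neg hI.1)
        show liftP γ'' (-I) 1 = liftP (conjPath γ) (-I) 1
        rw [liftP_conj, ← hq', ← h]
        exact hc3
      have hKeq : K γ'' = K (conjPath γ) := stem_path_indep h₂₃ hK hc1 hβP hend hIγ'' hIβ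
      obtain ⟨hcj0, hcj1⟩ := stem_conj h₂₃ hK hγ
      rw [hKeq, hcj0, hcj1, h, hg']
      rw [neg_mul, neg_mul_neg]
      exact key_alg hII

end Master

section Main

variable {n : ℕ}

lemma pointStem_eq {Ω₁ Ω' : Set (Fin n → Hq)} {f : (Fin n → Hq) → Hq}
    {F : C(unitInterval, Fin n → ℂ) → Fin 2 → Hq}
    (hSP : StemPreserving Ω₁ Ω') (hF : IsStem Ω' f F) {q : Fin n → Hq} (hre : ¬ isRealH q)
    (hE : ∃ γ, γ ∈ PathsTo Ω₁ ∧ (∀ t, liftP γ (Jmap q) t ∈ Ω₁) ∧ liftP γ (Jmap q) 1 = q) :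
    pointStem Ω₁ Ω' f q = F hE.choose := by
  unfold pointStem
  rw [if_neg hre, dif_pos hE]
  exact subStem_eq hF hE.choose_spec.1.1 (hSP.1 _ hE.choose_spec.1)

lemma key_alg2 {J a G0 G1 K0 K1 : Hq} (hJJ : J * J = -1) :
    (a * G0 + (J * a) * G1) * K0 + (J * (a * G0 + (J * a) * G1)) * K1
      = a * (G0 * K0 - G1 * K1) + (J * a) * (G1 * K0 + G0 * K1) := by
  have hx : ∀ x : Hq, J * (J * x) = -x := fun x => by rw [← mul_assoc, hJJ, neg_one_mul]
  simp only [add_mul, mul_add, mul_sub, sub_eq_add_neg, mul_assoc, hx, mul_neg, smul_mul_assoc]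
  abel_nf
  simp [smul_mul_assoc, mul_assoc]


end Main
/-- associativity of the `*`-product: `(f*g)*k = f*(g*k)` on `Ω₁`. -/
theorem starProd_assoc {n : ℕ} (Ω₁ Ω₂ Ω₃ : Set (Fin n → Hq))
    (h₁ : RealPathConnected Ω₁) (h₂ : RealPathConnected Ω₂)
    (h₁₂ : StemPreserving Ω₁ Ω₂) (h₂₃ : StemPreserving Ω₂ Ω₃)
    (f g k : (Fin n → Hq) → Hq)
    (hf : IsPathSlice Ω₁ f) (hg : IsPathSlice Ω₂ g) (hk : IsPathSlice Ω₃ k) :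
    ∀ q ∈ Ω₁, starProd Ω₁ Ω₃ (starProd Ω₁ Ω₂ f g) k q
      = starProd Ω₁ Ω₂ f (starProd Ω₂ Ω₃ g k) q := by
  obtain ⟨G, hG⟩ := hg
  obtain ⟨K, hK⟩ := hk
  intro q hq
  by_cases hre : isRealH q
  · simp [starProd, pointStem, hre, jmap_of_real hre, mul_assoc]
  · obtain ⟨γ₀, hγ₀, I₀, hI₀, hend₀⟩ := h₁ q hq
    have hI₀s : I₀ ∈ Sph := hI₀.1
    have hq0 : q = liftMap I₀ (γ₀ 1) := hend₀.symm
    have hJpm : Jmap q = I₀ ∨ Jmap q = -I₀ := by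
      rw [hq0]
      exact jmap_lift hI₀s (by rw [← hq0]; exact hre)
    have hE : ∃ γ, γ ∈ PathsTo Ω₁ ∧ (∀ t, liftP γ (Jmap q) t ∈ Ω₁) ∧
        liftP γ (Jmap q) 1 = q := by
      rcases hJpm with h | h
      · exact ⟨γ₀, hγ₀, by rw [h]; exact hI₀.2, by rw [h]; exact hend₀⟩
      · refine ⟨conjPath γ₀, ?_, fun t => ?_, ?_⟩
        · refine mem_PathsTo (conjPath_zero_real hγ₀.1) (I := -I₀) ⟨sph_neg hI₀s, fun t => ?_⟩
          rw [liftP_conj]; exact hI₀.2 t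
        · rw [h, liftP_conj]; exact hI₀.2 t
        · rw [h, liftP_conj]; exact hend₀
    obtain ⟨hγ1, hγ2, hγ3⟩ := hE.choose_spec
    set γ := hE.choose with hγdef
    have hγP2 : γ ∈ PathsTo Ω₂ := by
      obtain ⟨I, hI, -⟩ := h₁₂.1 γ hγ1
      exact mem_PathsTo hγ1.1 hI
    have hPg : pointStem Ω₁ Ω₂ g q = G γ := pointStem_eq h₁₂ hG hre hE
    have hPk : pointStem Ω₁ Ω₃ k q = K γ := by
      unfold pointStem
      rw [if_neg hre, dif_pos hE]
      exact subStem_eq hK hγ1.1 (h₂₃.1 γ hγP2)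
    have hM : pointStem Ω₁ Ω₂ (starProd Ω₂ Ω₃ g k) q = vstar (G γ) (K γ) :=
      pointStem_eq h₁₂ (starProd_stem h₂₃ hG hK) hre hE
    have hJJ : Jmap q * Jmap q = -1 := by
      rcases hJpm with h | h
      · rw [h]; exact sph_mul_self hI₀s
      · rw [h]; exact sph_mul_self (sph_neg hI₀s)
    simp only [starProd]
    rw [hPg, hPk, hM, vstar_zero, vstar_one]
    exact key_alg2 hJJ
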